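/- Let F: ℝ → ℝ be measurable and nondecreasing with F(x) = 0 for x ≤ 0 and 0 ≤ F(x) ≤ 1 for all x, let r > 0, δ > 0, N > 0 with σ²(N) > 0, where μ(u) := ∫₀^u (1 − F(x)) dx and σ²(u) := ∫₀^u 2x(1 − F(x)) dx. Suppose δ ≥ μ(N) + rN − σ²(N)/(2N), and let γ be the unique positive root of (1/2)σ²(N)·m² − (μ(N) − δ)·m − r = 0. Let η > 0 and V(x) := η·e^{−γx}. Then for every x ∈ ℝ, min_{u ∈ [0,N]} [ (1/2)σ²(u)·V''(x) + (μ(u) − δ)·V'(x) − r·V(x) ] = 0, and the minimum over [0,N] is attained at u = N. -/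

import Mathlib

private lemma exp_deriv_aux (a c : ℝ) :
    deriv (fun x => a * Real.exp (c * x)) = fun x => a * c * Real.exp (c * x) := by
  funext x
  have h : HasDerivAt (fun x => a * Real.exp (c * x)) (a * c * Real.exp (c * x)) x := by
    have := ((Real.hasDerivAt_exp (c * x)).comp x ((hasDerivAt_id x).const_mul c)).const_mul a
    refine this.congr_deriv ?_; ring
  exact h.deriv

/-- High-debt-liability case of excess-of-loss reinsurance: if
`δ ≥ μ(N) + rN − σ²(N)/(2N)` and `γ` is the unique positive root of
`(1/2)σ²(N)m² − (μ(N) − δ)m − r = 0`, then `V x = η exp(−γx)` solves the HJB equation;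
the minimum over `u ∈ [0, N]` of the HJB operator is `0`, attained at `u = N`. -/
theorem stmt_13 (F : ℝ → ℝ) (hmeas : Measurable F) (hmono : Monotone F)
    (hF0 : ∀ x ≤ (0 : ℝ), F x = 0) (hF1 : ∀ x, 0 ≤ F x ∧ F x ≤ 1)
    (r δ N : ℝ) (hr : 0 < r) (hδ : 0 < δ) (hN : 0 < N)
    (μ σ2 : ℝ → ℝ)
    (hμ : ∀ u, μ u = ∫ x in (0 : ℝ)..u, (1 - F x))
    (hσ2 : ∀ u, σ2 u = ∫ x in (0 : ℝ)..u, 2 * x * (1 - F x))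
    (hσ2N : 0 < σ2 N)
    (hhigh : μ N + r * N - σ2 N / (2 * N) ≤ δ)
    (γ : ℝ) (hγpos : 0 < γ)
    (hγroot : (1 / 2) * σ2 N * γ ^ 2 - (μ N - δ) * γ - r = 0)
    (hγuniq : ∀ m : ℝ, 0 < m → (1 / 2) * σ2 N * m ^ 2 - (μ N - δ) * m - r = 0 → m = γ)
    (η : ℝ) (hη : 0 < η)
    (V : ℝ → ℝ) (hV : ∀ x, V x = η * Real.exp (-γ * x)) :
    ∀ x : ℝ,
      IsMinOn
        (fun u : ℝ => (1 / 2) * σ2 u * deriv (deriv V) x + (μ u - δ) * deriv V x - r * V x)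
        (Set.Icc 0 N) N ∧
      (1 / 2) * σ2 N * deriv (deriv V) x + (μ N - δ) * deriv V x - r * V x = 0 := by
  have hVfun : V = fun x => η * Real.exp (-γ * x) := funext hV
  have hd1 : deriv V = fun x => η * -γ * Real.exp (-γ * x) := by
    rw [hVfun, exp_deriv_aux]
  have hd2 : (deriv fun x => η * -γ * Real.exp (-γ * x)) = fun x => η * -γ * -γ * Real.exp (-γ * x) :=
    exp_deriv_aux (η * -γ) (-γ)
  -- γ N ≤ 1
  have hγN : γ * N ≤ 1 := by
    by_contra hc
    push_neg at hc
    have hmd : (μ N - δ) * γ = 1 / 2 * σ2 N * γ ^ 2 - r := by linarith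
    have hA : (μ N - δ) * (γ * N ^ 2) ≤ (σ2 N / (2 * N) - r * N) * (γ * N ^ 2) :=
      mul_le_mul_of_nonneg_right (by linarith) (by positivity)
    have hB : (σ2 N / (2 * N) - r * N) * (γ * N ^ 2) = σ2 N * γ * N / 2 - r * γ * N ^ 3 := by
      field_simp
    have hC : (1 / 2 * σ2 N * γ ^ 2 - r) * N ^ 2 ≤ σ2 N * γ * N / 2 - r * γ * N ^ 3 := by
      calc (1 / 2 * σ2 N * γ ^ 2 - r) * N ^ 2 = (μ N - δ) * γ * N ^ 2 := by rw [hmd]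
        _ = (μ N - δ) * (γ * N ^ 2) := by ring
        _ ≤ _ := by rw [hB] at hA; exact hA
    have hfac2 : 0 < (γ * N - 1) * (1 / 2 * σ2 N * (γ * N) + r * N ^ 2) :=
      mul_pos (by linarith) (by positivity)
    nlinarith [hC, hfac2]
  -- integrability
  have hint1 : ∀ a b : ℝ, IntervalIntegrable (fun x => 1 - F x) MeasureTheory.volume a b :=
    fun a b => (show Antitone (fun x => 1 - F x) from
      fun a b hab => sub_le_sub_left (hmono hab) 1).intervalIntegrable
  have hint2 : ∀ a b : ℝ, IntervalIntegrable (fun x => 2 * x * (1 - F x))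
      MeasureTheory.volume a b :=
    fun a b => (hint1 a b).continuousOn_mul (by fun_prop)
  -- key inequality
  have hkey : ∀ u ∈ Set.Icc (0:ℝ) N, γ / 2 * (σ2 N - σ2 u) ≤ μ N - μ u := by
    intro u hu
    rw [hμ, hμ, hσ2, hσ2,
      intervalIntegral.integral_interval_sub_left (hint1 0 N) (hint1 0 u),
      intervalIntegral.integral_interval_sub_left (hint2 0 N) (hint2 0 u)]
    rw [← sub_nonneg, ← intervalIntegral.integral_const_mul,
      ← intervalIntegral.integral_sub (hint1 u N) ((hint2 u N).const_mul _)]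
    apply intervalIntegral.integral_nonneg hu.2
    intro x hx
    have h1 : 0 ≤ 1 - F x := by linarith [(hF1 x).2]
    have h2 : γ * x ≤ 1 := by
      have : γ * x ≤ γ * N := by nlinarith [hx.2]
      linarith
    have : (1 - F x) - γ / 2 * (2 * x * (1 - F x)) = (1 - F x) * (1 - γ * x) := by ring
    rw [this]
    exact mul_nonneg h1 (by linarith)
  intro x
  have hexp : 0 < η * Real.exp (-γ * x) := by positivity
  constructor
  · rw [isMinOn_iff]
    intro u hu
    simp only [hd1, hd2, hV]
    have h1 : 0 ≤ γ * (η * Real.exp (-γ * x)) * ((μ N - μ u) - γ / 2 * (σ2 N - σ2 u)) :=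
      mul_nonneg (by positivity) (by linarith [hkey u hu])
    nlinarith [h1]
  · simp only [hd1, hd2, hV]
    linear_combination (η * Real.exp (-γ * x)) * hγroot
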